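/- Let G be a connected graph of order n. Then th₊(G) = n if and only if G is the complete graph Kₙ. -/

import Mathlib

open SimpleGraph

/-- Reachability in `G` avoiding the blue set `B` (i.e., within a white component). -/
def offReach {V : Type*} (G : SimpleGraph V) (B : Set V) : V → V → Prop :=
  Relation.ReflTransGen (fun a b => G.Adj a b ∧ a ∉ B ∧ b ∉ B)

/-- The positive semidefinite color change rule: a blue vertex `v` forces a white vertex `w`
if `w` is the unique white neighbor of `v` in the white component of `w` (together with `B`). -/
def psdForces {V : Type*} (G : SimpleGraph V) (B : Set V) (v w : V) : Prop :=
  v ∈ B ∧ w ∉ B ∧ G.Adj v w ∧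
    ∀ u, u ∉ B → G.Adj v u → offReach G B u w → u = w

/-- One round of PSD forcing: perform all possible forces. -/
def psdStep {V : Type*} (G : SimpleGraph V) (B : Set V) : Set V :=
  B ∪ {w | ∃ v, psdForces G B v w}

/-- `S` is a positive semidefinite zero forcing set. -/
def IsPSDForcingSet {V : Type*} (G : SimpleGraph V) (S : Set V) : Prop :=
  ∃ t, (psdStep G)^[t] S = Set.univ

/-- The PSD propagation time of `S`. -/
noncomputable def psdPt {V : Type*} (G : SimpleGraph V) (S : Set V) : ℕ :=
  sInf {t | (psdStep G)^[t] S = Set.univ}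

/-- The PSD throttling number of `G`. -/
noncomputable def psdTh {V : Type*} (G : SimpleGraph V) [Fintype V] : ℕ :=
  sInf {k | ∃ S : Finset V, IsPSDForcingSet G ↑S ∧ k = S.card + psdPt G ↑S}

private lemma exists_nbr {V : Type*} {G : SimpleGraph V} {x y : V} (w : G.Walk y x) (h : y ≠ x) :
    ∃ v, G.Adj v x := by
  induction w with
  | nil => exact absurd rfl h
  | @cons a b c hab p ih =>
      by_cases hbc : b = c
      · exact ⟨a, hbc ▸ hab⟩
      · exact ih hbc

/-- In the complete graph, if at least two vertices are white, no force is possible. -/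
private lemma top_step_fix {V : Type*} {B : Set V} {x y : V}
    (hx : x ∉ B) (hy : y ∉ B) (hxy : x ≠ y) :
    psdStep (⊤ : SimpleGraph V) B = B := by
  ext w
  simp only [psdStep, Set.mem_union, Set.mem_setOf_eq, or_iff_left_iff_imp]
  rintro ⟨v, hvB, hwB, _, huniq⟩
  by_cases hwx : w = x
  · have hvy : v ≠ y := fun h => hy (h ▸ hvB)
    have hyw : y ≠ w := fun h => hxy ((h.trans hwx)).symm
    have := huniq y hy (by simpa using hvy) (Relation.ReflTransGen.single ⟨by simpa using hyw, hy, hwB⟩)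
    exact (hyw this).elim
  · have hvx : v ≠ x := fun h => hx (h ▸ hvB)
    have hxw : x ≠ w := fun h => hwx h.symm
    have := huniq x hx (by simpa using hvx) (Relation.ReflTransGen.single ⟨by simpa using hxw, hx, hwB⟩)
    exact (hxw this).elim

theorem stmt_17 {V : Type*} [Fintype V] (G : SimpleGraph V) (hG : G.Connected) :
    psdTh G = Fintype.card V ↔ G = ⊤ := by
  classical
  have hne : Nonempty V := hG.nonempty
  have hcard1 : 1 ≤ Fintype.card V := Fintype.card_pos
  constructor
  · -- psdTh = n → complete, by contrapositive
    intro hth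
    by_contra hne_top
    obtain ⟨x, y, hxy, hnadj⟩ : ∃ x y : V, x ≠ y ∧ ¬ G.Adj x y := by
      by_contra hc
      push_neg at hc
      apply hne_top
      ext a b
      simp only [top_adj]
      exact ⟨fun h => h.ne, fun h => hc a b h⟩
    have hcard2 : 2 ≤ Fintype.card V := by
      have := Finset.one_lt_card.mpr ⟨x, Finset.mem_univ x, y, Finset.mem_univ y, hxy⟩
      have h1 : 1 < Fintype.card V := by simpa [Finset.card_univ] using this
      omega
    set S : Finset V := ({x, y} : Finset V)ᶜ with hS
    have hmemS : ∀ v : V, v ∉ (↑S : Set V) ↔ v = x ∨ v = y := by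
      intro v; simp [hS]; tauto
    have hreachy : ∀ z, offReach G (↑S) y z → z = y := by
      intro z hz
      induction hz with
      | refl => rfl
      | tail _ h ih =>
          obtain ⟨hadj, hb, hc⟩ := h
          rcases (hmemS _).mp hc with h1 | h1
          · rw [ih] at hadj; rw [h1] at hadj
            exact absurd hadj.symm hnadj
          · exact h1
    have hreachx : ∀ z, offReach G (↑S) x z → z = x := by
      intro z hz
      induction hz with
      | refl => rfl
      | tail _ h ih =>
          obtain ⟨hadj, hb, hc⟩ := h
          rcases (hmemS _).mp hc with h1 | h1
          · exact h1
          · rw [ih] at hadj; rw [h1] at hadj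
            exact absurd hadj hnadj
    have hfx : ∃ v, psdForces G (↑S) v x := by
      obtain ⟨v, hv⟩ := exists_nbr ((hG y x).some) hxy.symm
      have hvS : v ∈ (↑S : Set V) := by
        by_contra hvn
        rcases (hmemS v).mp hvn with rfl | rfl
        · exact hv.ne rfl
        · exact hnadj hv.symm
      refine ⟨v, hvS, (hmemS x).mpr (Or.inl rfl), hv, fun u hu _ hr => ?_⟩
      rcases (hmemS u).mp hu with rfl | rfl
      · rfl
      · exact absurd (hreachy x hr) hxy
    have hfy : ∃ v, psdForces G (↑S) v y := by
      obtain ⟨v, hv⟩ := exists_nbr ((hG x y).some) hxy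
      have hvS : v ∈ (↑S : Set V) := by
        by_contra hvn
        rcases (hmemS v).mp hvn with rfl | rfl
        · exact hnadj hv
        · exact hv.ne rfl
      refine ⟨v, hvS, (hmemS y).mpr (Or.inr rfl), hv, fun u hu _ hr => ?_⟩
      rcases (hmemS u).mp hu with rfl | rfl
      · exact absurd (hreachx y hr) hxy.symm
      · rfl
    have hstep : psdStep G (↑S) = Set.univ := by
      ext w
      simp only [Set.mem_univ, iff_true, psdStep, Set.mem_union, Set.mem_setOf_eq]
      by_cases hw : w ∈ (↑S : Set V)
      · exact Or.inl hw
      right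
      rcases (hmemS w).mp hw with h | h
      · rw [h]; exact hfx
      · rw [h]; exact hfy
    have hforce : IsPSDForcingSet G (↑S) := ⟨1, by simpa using hstep⟩
    have hpt : psdPt G (↑S) ≤ 1 := Nat.sInf_le (by simpa [psdPt] using hstep)
    have hScard : S.card = Fintype.card V - 2 := by
      rw [hS, Finset.card_compl, Finset.card_insert_of_notMem (by simpa using hxy),
        Finset.card_singleton]
    have hth_le : psdTh G ≤ S.card + psdPt G (↑S) :=
      Nat.sInf_le ⟨S, hforce, rfl⟩
    have : psdTh G < Fintype.card V := by
      calc psdTh G ≤ S.card + psdPt G (↑S) := hth_le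
        _ ≤ (Fintype.card V - 2) + 1 := by omega
        _ < Fintype.card V := by omega
    omega
  · rintro rfl
    have h0 : psdPt (⊤ : SimpleGraph V) (↑(Finset.univ : Finset V)) = 0 :=
      Nat.sInf_eq_zero.mpr (Or.inl (by simp))
    apply le_antisymm
    · exact Nat.sInf_le ⟨Finset.univ, ⟨0, by simp⟩, by rw [h0]; simp⟩
    · refine le_csInf ?_ ?_
      · exact ⟨Fintype.card V, Finset.univ, ⟨0, by simp⟩, by rw [h0]; simp⟩
      rintro k ⟨S, hSf, rfl⟩
      have hcompl : Sᶜ.card ≤ 1 := by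
        by_contra hlt
        push_neg at hlt
        obtain ⟨x, hx, y, hy, hxy⟩ := Finset.one_lt_card.mp hlt
        rw [Finset.mem_compl] at hx hy
        have hfix : ∀ t, (psdStep (⊤ : SimpleGraph V))^[t] (↑S) = ↑S :=
          fun t => Function.iterate_fixed
            (top_step_fix (by simpa using hx) (by simpa using hy) hxy) t
        obtain ⟨t, ht⟩ := hSf
        rw [hfix t] at ht
        have : x ∈ (↑S : Set V) := ht.symm ▸ Set.mem_univ x
        exact hx (by simpa using this)
      have hScard : Fintype.card V - 1 ≤ S.card := by
        have := Finset.card_compl S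
        omega
      by_cases huniv : (↑S : Set V) = Set.univ
      · have hS : S = Finset.univ := by
          apply Finset.coe_injective; simpa using huniv
        rw [hS, Finset.card_univ]
        exact Nat.le_add_right _ _
      · have hpt : 1 ≤ psdPt (⊤ : SimpleGraph V) (↑S) := by
          rcases Nat.eq_zero_or_pos (psdPt (⊤ : SimpleGraph V) (↑S)) with h | h
          · exfalso
            have hmem : psdPt (⊤ : SimpleGraph V) (↑S) ∈
                {t | (psdStep (⊤ : SimpleGraph V))^[t] (↑S) = Set.univ} :=
              Nat.sInf_mem hSf
            rw [h] at hmem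
            exact huniv (by simpa using hmem)
          · exact h
        omega
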